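/- Let b ≥ 2 be an integer, G a b-dc-semigroup, j a non-negative integer and l a positive integer such that I_b(j,l) ⊆ G. Put d = ⌈j/l⌉ and assume d ≥ 1. Then every integer x with x ≥ b^{d·j} belongs to G. -/

import Mathlib

/-- `Ib b i k` is the set of integers `x` with `b^i ≤ x < b^(i+k)`. -/
def Ib (b i k : ℕ) : Set ℕ := {x : ℕ | b ^ i ≤ x ∧ x < b ^ (i + k)}

/-- A set `G` of positive integers is a `b`-dc-semigroup if it is closed under
multiplication and closed with respect to the number of base-`b` digits. -/
def IsDCSemigroup (b : ℕ) (G : Set ℕ) : Prop :=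
  (∀ x ∈ G, 0 < x) ∧
  (∀ x ∈ G, ∀ y ∈ G, x * y ∈ G) ∧
  (∀ x ∈ G, ∀ y : ℕ, 0 < y → Nat.log b y = Nat.log b x → y ∈ G)

theorem stmt_5 (b : ℕ) (hb : 2 ≤ b) (G : Set ℕ) (hG : IsDCSemigroup b G)
    (j l : ℕ) (hl : 0 < l) (hIb : Ib b j l ⊆ G)
    (d : ℕ) (hd : d = j ⌈/⌉ l) (hd1 : 1 ≤ d) :
    ∀ x : ℕ, b ^ (d * j) ≤ x → x ∈ G := by
  obtain ⟨hpos, hmul, hdig⟩ := hG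
  have hb1 : 1 < b := hb
  have hb0 : 0 < b := by omega
  -- basic facts about d, j, l
  have hceil : d = (j + l - 1) / l := by rw [hd, Nat.ceilDiv_eq_add_pred_div]
  have h1 : d * l ≤ j + l - 1 := by rw [hceil]; exact Nat.div_mul_le_self _ _
  have h2 : j + l - 1 < (d + 1) * l := by
    have := Nat.lt_succ_of_le (le_of_eq hceil.symm)
    exact (Nat.div_lt_iff_lt_mul hl).mp this
  have hlD : l ≤ d * l := Nat.le_mul_of_pos_left l hd1
  have hdl : j ≤ d * l := by
    have h2' : (d + 1) * l = d * l + l := by ring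
    rw [h2'] at h2
    set D := d * l
    omega
  have hj1 : 1 ≤ j := by
    set D := d * l
    omega
  -- T m : every positive number with base-b length m is in G
  set T : ℕ → Prop := fun m => ∀ y : ℕ, 0 < y → Nat.log b y = m → y ∈ G with hT
  have hTof : ∀ x ∈ G, T (Nat.log b x) := fun x hx y hy hlog => hdig x hx y hy hlog
  have hT1 : ∀ m, j ≤ m → m < j + l → T m := by
    intro m hm1 hm2 y hy hlog
    apply hIb
    constructor
    · calc b ^ j ≤ b ^ m := Nat.pow_le_pow_right hb0 hm1
        _ = b ^ Nat.log b y := by rw [hlog]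
        _ ≤ y := Nat.pow_log_le_self b hy.ne'
    · calc y < b ^ (Nat.log b y + 1) := Nat.lt_pow_succ_log_self hb1 y
        _ = b ^ (m + 1) := by rw [hlog]
        _ ≤ b ^ (j + l) := Nat.pow_le_pow_right hb0 (by omega)
  have hTpow : ∀ m, T m → b ^ m ∈ G := fun m hTm =>
    hTm (b ^ m) (pow_pos hb0 m) (Nat.log_pow hb1 m)
  have hTadd : ∀ m m', T m → T m' → T (m + m') := by
    intro m m' hTm hTm'
    have hz : b ^ m * b ^ m' ∈ G := hmul _ (hTpow m hTm) _ (hTpow m' hTm')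
    have := hTof _ hz
    rwa [← pow_add, Nat.log_pow hb1] at this
  have hTadd1 : ∀ m m', 1 ≤ m → 1 ≤ m' → T m → T m' → T (m + m' + 1) := by
    intro m m' hm hm' hTm hTm'
    have hX2 : 2 ≤ b ^ (m + 1) := le_trans hb (Nat.le_self_pow (by omega) b)
    have hY2 : 2 ≤ b ^ (m' + 1) := le_trans hb (Nat.le_self_pow (by omega) b)
    have hxG : b ^ (m + 1) - 1 ∈ G := by
      apply hTm _ (by omega)
      apply Nat.log_eq_of_pow_le_of_lt_pow
      · have : b ^ m < b ^ (m + 1) := Nat.pow_lt_pow_right hb1 (lt_add_one m)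
        omega
      · omega
    have hyG : b ^ (m' + 1) - 1 ∈ G := by
      apply hTm' _ (by omega)
      apply Nat.log_eq_of_pow_le_of_lt_pow
      · have : b ^ m' < b ^ (m' + 1) := Nat.pow_lt_pow_right hb1 (lt_add_one m')
        omega
      · omega
    have hzG : (b ^ (m + 1) - 1) * (b ^ (m' + 1) - 1) ∈ G := hmul _ hxG _ hyG
    have hupper : (b ^ (m + 1) - 1) * (b ^ (m' + 1) - 1) < b ^ (m + m' + 1 + 1) := by
      have : (b ^ (m + 1) - 1) * (b ^ (m' + 1) - 1) < b ^ (m + 1) * b ^ (m' + 1) := by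
        apply Nat.mul_lt_mul_of_lt_of_le (by omega) (by omega) (by omega)
      calc (b ^ (m + 1) - 1) * (b ^ (m' + 1) - 1) < b ^ (m + 1) * b ^ (m' + 1) := this
        _ = b ^ (m + m' + 1 + 1) := by rw [← pow_add]; ring_nf
    have hlower : b ^ (m + m' + 1) ≤ (b ^ (m + 1) - 1) * (b ^ (m' + 1) - 1) := by
      have hXY : b ^ (m + 1) * b ^ (m' + 1) = b * b ^ (m + m' + 1) := by
        rw [← pow_add, ← pow_succ']; ring_nf
      have h2X : 2 * b ^ (m + 1) ≤ b ^ (m + m' + 1) := by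
        calc 2 * b ^ (m + 1) ≤ b ^ m' * b ^ (m + 1) := by
              apply Nat.mul_le_mul_right
              calc 2 ≤ b := hb
                _ = b ^ 1 := (pow_one b).symm
                _ ≤ b ^ m' := Nat.pow_le_pow_right hb0 hm'
          _ = b ^ (m + m' + 1) := by rw [← pow_add]; ring_nf
      have h2Y : 2 * b ^ (m' + 1) ≤ b ^ (m + m' + 1) := by
        calc 2 * b ^ (m' + 1) ≤ b ^ m * b ^ (m' + 1) := by
              apply Nat.mul_le_mul_right
              calc 2 ≤ b := hb
                _ = b ^ 1 := (pow_one b).symm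
                _ ≤ b ^ m := Nat.pow_le_pow_right hb0 hm
          _ = b ^ (m + m' + 1) := by rw [← pow_add]; ring_nf
      have hX1 : (1:ℕ) ≤ b ^ (m + 1) := by omega
      have hY1 : (1:ℕ) ≤ b ^ (m' + 1) := by omega
      zify [hX1, hY1]
      zify at hXY h2X h2Y hb
      nlinarith [hXY, h2X, h2Y, hb]
    have hlog : Nat.log b ((b ^ (m + 1) - 1) * (b ^ (m' + 1) - 1)) = m + m' + 1 :=
      Nat.log_eq_of_pow_le_of_lt_pow hlower hupper
    have := hTof _ hzG
    rwa [hlog] at this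
  -- base: for each k, T holds on [(k+1)j, (k+1)j + (k+1)l)
  have hbase : ∀ k, ∀ m, (k + 1) * j ≤ m → m < (k + 1) * j + (k + 1) * l → T m := by
    intro k
    induction k with
    | zero => intro m hm1 hm2; exact hT1 m (by omega) (by omega)
    | succ k ih =>
      intro m hm1 hm2
      have e1 : (k + 1 + 1) * j = (k + 1) * j + j := by ring
      have e2 : (k + 1 + 1) * l = (k + 1) * l + l := by ring
      rw [e1] at hm1
      rw [e1, e2] at hm2
      by_cases hc : m - j < (k + 1) * j + (k + 1) * l
      · have hmj : (k + 1) * j ≤ m - j := by omega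
        have := hTadd (m - j) j (ih (m - j) hmj hc) (hT1 j le_rfl (by omega))
        rwa [Nat.sub_add_cancel (by omega)] at this
      · push_neg at hc
        have hkl1 : 1 ≤ (k + 1) * l := Nat.le_mul_of_pos_left l (by omega) |>.trans' hl
        set a := (k + 1) * j + (k + 1) * l - 1 with ha
        set t := m - j - 1 - a with ht
        have hkj1 : j ≤ (k + 1) * j := Nat.le_mul_of_pos_left j (by omega)
        have hTa : T a := ih a (by omega) (by omega)
        have hTc : T (j + t) := hT1 (j + t) (by omega) (by omega)
        have := hTadd1 a (j + t) (by omega) (by omega) hTa hTc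
        have heq : a + (j + t) + 1 = m := by omega
        rwa [heq] at this
  -- main: every m ≥ d*j satisfies T m
  have hmain : ∀ m, d * j ≤ m → T m := by
    intro m
    induction m using Nat.strong_induction_on with
    | _ m ih =>
      intro hm
      by_cases hcase : m < d * j + d * l
      · have e : d = (d - 1) + 1 := by omega
        rw [e] at hm hcase
        exact hbase (d - 1) m hm hcase
      · push_neg at hcase
        have hjd : j ≤ d * j := Nat.le_mul_of_pos_left j hd1
        have h1' : d * j ≤ m - j := by omega
        have h2' : m - j < m := by omega
        have := hTadd (m - j) j (ih (m - j) h2' h1') (hT1 j le_rfl (by omega))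
        rwa [Nat.sub_add_cancel (by omega)] at this
  intro x hx
  have hx0 : 0 < x := lt_of_lt_of_le (pow_pos hb0 _) hx
  exact hmain (Nat.log b x) ((Nat.le_log_iff_pow_le hb1 hx0.ne').mpr hx) x hx0 rfl
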